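/- A subset A of a Polish space Y (more generally of Y^n) is universally Baire—i.e., f⁻¹[A] has the Baire property in Z for every continuous f : Z → Y^n with Z compact Hausdorff—if and only if f⁻¹[A] has the Baire property for every continuous f : Z → Y^n with Z compact Hausdorff and extremally disconnected. -/

import Mathlib

universe u

open Set Function

/-- A set has the Baire property if it differs from an open set by a meager set. -/
def HasBaireProperty {Z : Type*} [TopologicalSpace Z] (S : Set Z) : Prop :=
  ∃ V : Set Z, IsOpen V ∧ IsMeagre (symmDiff S V)

/-- A copy of a type, endowed with the discrete topology. -/
structure DiscCopy (Z : Type u) : Type u where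
  /-- the underlying element -/
  val : Z

instance (Z : Type u) : TopologicalSpace (DiscCopy Z) := ⊥
instance (Z : Type u) : DiscreteTopology (DiscCopy Z) := ⟨rfl⟩

/-- The image of a nowhere dense set under an irreducible closed surjection is
nowhere dense. -/
lemma isNowhereDense_image_of_zorn {E Z : Type*} [TopologicalSpace E] [TopologicalSpace Z]
    {ρ : E → Z} (ρ_cont : Continuous ρ) (ρ_surj : Surjective ρ) (ρ_closed : IsClosedMap ρ)
    (zorn : ∀ E₀ : Set E, E₀ ≠ univ → IsClosed E₀ → ρ '' E₀ ≠ univ)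
    {N : Set E} (hN : IsNowhereDense N) : IsNowhereDense (ρ '' N) := by
  have hsub : ρ '' N ⊆ ρ '' closure N := image_mono subset_closure
  have hcl : IsClosed (ρ '' closure N) := ρ_closed _ isClosed_closure
  have hint : interior (ρ '' closure N) = ∅ := by
    by_contra hne
    rcases Set.nonempty_iff_ne_empty.mpr hne with ⟨x, hx⟩
    set O := interior (ρ '' closure N) with hO
    have O_open : IsOpen O := isOpen_interior
    set G := ρ ⁻¹' O \ closure N with hG
    have G_open : IsOpen G := (O_open.preimage ρ_cont).sdiff isClosed_closure
    have G_ne : G.Nonempty := by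
      by_contra hGe
      rw [not_nonempty_iff_eq_empty] at hGe
      have hsub2 : ρ ⁻¹' O ⊆ closure N := by
        intro a ha
        by_contra hna
        have haG : a ∈ G := ⟨ha, hna⟩
        rw [hGe] at haG
        exact haG
      have : ρ ⁻¹' O ⊆ interior (closure N) :=
        (O_open.preimage ρ_cont).subset_interior_iff.mpr hsub2
      rcases ρ_surj x with ⟨a, rfl⟩
      have : a ∈ interior (closure N) := this hx
      rw [hN] at this
      exact this
    have Gc_ne_univ : Gᶜ ≠ univ := by
      rcases G_ne with ⟨a, ha⟩
      intro hc
      have : a ∈ Gᶜ := hc ▸ mem_univ a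
      exact this ha
    have := zorn Gᶜ Gc_ne_univ G_open.isClosed_compl
    apply this
    apply eq_univ_of_forall
    intro z
    by_contra hz
    -- every preimage of z lies in G
    have fiber_sub : ρ ⁻¹' {z} ⊆ G := by
      intro a ha
      by_contra hna
      exact hz ⟨a, hna, ha⟩
    rcases ρ_surj z with ⟨a, rfl⟩
    have haG : a ∈ G := fiber_sub rfl
    have hzO : ρ a ∈ O := haG.1
    have : ρ a ∈ ρ '' closure N := interior_subset hzO
    rcases this with ⟨b, hbN, hbz⟩
    have hbG : b ∈ G := fiber_sub hbz
    exact hbG.2 hbN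
  rw [IsNowhereDense]
  have : closure (ρ '' N) ⊆ ρ '' closure N := closure_minimal hsub hcl
  have h2 : interior (closure (ρ '' N)) ⊆ interior (ρ '' closure N) := interior_mono this
  rw [hint] at h2
  exact subset_empty_iff.mp h2

/-- The image of a meagre set under an irreducible closed surjection is meagre. -/
lemma isMeagre_image_of_zorn {E Z : Type*} [TopologicalSpace E] [TopologicalSpace Z]
    {ρ : E → Z} (ρ_cont : Continuous ρ) (ρ_surj : Surjective ρ) (ρ_closed : IsClosedMap ρ)
    (zorn : ∀ E₀ : Set E, E₀ ≠ univ → IsClosed E₀ → ρ '' E₀ ≠ univ)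
    {M : Set E} (hM : IsMeagre M) : IsMeagre (ρ '' M) := by
  rcases isMeagre_iff_countable_union_isNowhereDense.mp hM with ⟨S, hS_nwd, hS_cnt, hS_sub⟩
  rw [isMeagre_iff_countable_union_isNowhereDense]
  refine ⟨(fun t => ρ '' t) '' S, ?_, hS_cnt.image _, ?_⟩
  · rintro _ ⟨t, ht, rfl⟩
    exact isNowhereDense_image_of_zorn ρ_cont ρ_surj ρ_closed zorn (hS_nwd t ht)
  · intro z hz
    rcases hz with ⟨a, haM, rfl⟩
    rcases hS_sub haM with ⟨t, htS, hat⟩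
    exact ⟨ρ '' t, ⟨t, htS, rfl⟩, ⟨a, hat, rfl⟩⟩

/-- The union of two meagre sets is meagre. -/
lemma IsMeagre.union' {X : Type*} [TopologicalSpace X] {s t : Set X}
    (hs : IsMeagre s) (ht : IsMeagre t) : IsMeagre (s ∪ t) := by
  rw [IsMeagre, compl_union]
  exact Filter.inter_mem hs ht

/-- The frontier-type set `closure V \ V` of an open set `V` is nowhere dense. -/
lemma isNowhereDense_closure_diff {X : Type*} [TopologicalSpace X] {V : Set X}
    (hV : IsOpen V) : IsNowhereDense (closure V \ V) := by
  have hcl : IsClosed (closure V \ V) := isClosed_closure.sdiff hV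
  rw [hcl.isNowhereDense_iff, eq_empty_iff_forall_notMem]
  intro x hx
  have hxc : x ∈ closure V := interior_subset hx |>.1
  rcases mem_closure_iff.mp hxc (interior (closure V \ V)) isOpen_interior hx with ⟨y, hy, hyV⟩
  exact (interior_subset hy).2 hyV

/-- Transfer of the Baire property down an irreducible closed surjection from an
extremally disconnected space. -/
lemma hasBaireProperty_of_preimage {E Z : Type*} [TopologicalSpace E] [TopologicalSpace Z]
    [ExtremallyDisconnected E]
    {ρ : E → Z} (ρ_cont : Continuous ρ) (ρ_surj : Surjective ρ) (ρ_closed : IsClosedMap ρ)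
    (zorn : ∀ E₀ : Set E, E₀ ≠ univ → IsClosed E₀ → ρ '' E₀ ≠ univ)
    {S : Set Z} (h : HasBaireProperty (ρ ⁻¹' S)) : HasBaireProperty S := by
  rcases h with ⟨V, V_open, V_meagre⟩
  set C := closure V with hC
  have C_open : IsOpen C := ExtremallyDisconnected.open_closure V V_open
  have C_closed : IsClosed C := isClosed_closure
  -- ρ⁻¹ S differs from the clopen set C by a meagre set
  have hVC : symmDiff V C ⊆ closure V \ V := by
    intro a ha
    rcases Set.mem_symmDiff.mp ha with ⟨h1, h2⟩ | ⟨h1, h2⟩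
    · exact absurd (subset_closure h1) h2
    · exact ⟨h1, h2⟩
  have hM : IsMeagre (symmDiff (ρ ⁻¹' S) C) := by
    have htri : symmDiff (ρ ⁻¹' S) C ⊆ symmDiff (ρ ⁻¹' S) V ∪ symmDiff V C :=
      symmDiff_triangle _ V _
    have h2 : IsMeagre (symmDiff V C) := by
      rw [isMeagre_iff_countable_union_isNowhereDense]
      exact ⟨{closure V \ V}, by
        rintro t rfl
        exact isNowhereDense_closure_diff V_open,
        countable_singleton _, by simpa using hVC⟩
    exact (V_meagre.union' h2).mono htri
  -- The candidate open set in Z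
  set W := (ρ '' Cᶜ)ᶜ with hW
  have W_open : IsOpen W := (ρ_closed _ C_open.isClosed_compl).isOpen_compl
  refine ⟨W, W_open, ?_⟩
  have key : symmDiff S W ⊆ ρ '' symmDiff (ρ ⁻¹' S) C := by
    intro x hx
    rcases Set.mem_symmDiff.mp hx with ⟨hxS, hxW⟩ | ⟨hxW, hxS⟩
    · -- x ∈ S, x ∉ W, so x ∈ ρ '' Cᶜ
      have : x ∈ ρ '' Cᶜ := not_not.mp (by simpa [hW] using hxW)
      rcases this with ⟨a, haC, rfl⟩
      exact ⟨a, Set.mem_symmDiff.mpr (Or.inl ⟨hxS, haC⟩), rfl⟩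
    · -- x ∈ W, x ∉ S
      rcases ρ_surj x with ⟨a, rfl⟩
      have haC : a ∈ C := by
        by_contra haC
        exact hxW ⟨a, haC, rfl⟩
      exact ⟨a, Set.mem_symmDiff.mpr (Or.inr ⟨haC, hxS⟩), rfl⟩
  exact (isMeagre_image_of_zorn ρ_cont ρ_surj ρ_closed zorn hM).mono key

/-- A subset `A` of a Polish space `Y` is universally Baire (preimages under continuous
maps from compact Hausdorff spaces have the Baire property) if and only if its preimages
under continuous maps from compact Hausdorff *extremally disconnected* spaces have the
Baire property. -/
theorem universallyBaire_iff_extremallyDisconnected_test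
    {Y : Type*} [TopologicalSpace Y] [PolishSpace Y] (A : Set Y) :
    (∀ (Z : Type u) [TopologicalSpace Z] [CompactSpace Z] [T2Space Z],
        ∀ f : Z → Y, Continuous f → HasBaireProperty (f ⁻¹' A)) ↔
    (∀ (Z : Type u) [TopologicalSpace Z] [CompactSpace Z] [T2Space Z]
        [ExtremallyDisconnected Z],
        ∀ f : Z → Y, Continuous f → HasBaireProperty (f ⁻¹' A)) := by
  constructor
  · intro H Z _ _ _ _ f hf
    exact H Z f hf
  · intro H Z _ _ _ f hf
    -- The Stone–Čech compactification of Z with the discrete topology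
    have hcont : Continuous (fun z : DiscCopy Z => z.val) := continuous_of_discreteTopology
    set π : StoneCech (DiscCopy Z) → Z := stoneCechExtend hcont with hπ
    have π_cont : Continuous π := continuous_stoneCechExtend hcont
    have π_surj : Surjective π := fun z =>
      ⟨stoneCechUnit ⟨z⟩, congrFun (stoneCechExtend_extends hcont) ⟨z⟩⟩
    haveI : ExtremallyDisconnected (StoneCech (DiscCopy Z)) :=
      CompactT2.Projective.extremallyDisconnected (StoneCech.projective (X := DiscCopy Z))
    -- Gleason cover: minimal closed subset mapping onto Z
    obtain ⟨E, E_comp, E_onto, E_min⟩ := exists_compact_surjective_zorn_subset π_cont π_surj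
    haveI : CompactSpace E := E_comp
    set ρ : E → Z := E.restrict π with hρ
    have ρ_cont : Continuous ρ := π_cont.continuousOn.restrict
    have ρ_surj : Surjective ρ := by
      intro z
      have hz : z ∈ π '' E := E_onto ▸ mem_univ z
      rcases hz with ⟨d, hd, hdz⟩
      exact ⟨⟨d, hd⟩, hdz⟩
    -- projectivity of the Stone–Čech compactification gives a map onto E
    obtain ⟨h, h_cont, h_comm⟩ :=
      (CompactT2.ExtremallyDisconnected.projective (A := StoneCech (DiscCopy Z)))
        π_cont ρ_cont ρ_surj
    -- h fixes E pointwise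
    have h_fix : ∀ e : E, h ↑e = e := by
      intro e
      by_contra hne
      rcases t2_separation hne with ⟨O₁, O₂, O₁_open, O₂_open, hhe, he, hdisj⟩
      set g : E → E := fun x => h ↑x with hg
      have g_cont : Continuous g := h_cont.comp continuous_subtype_val
      have g_comm : ∀ x : E, ρ (g x) = ρ x := fun x => congrFun h_comm ↑x
      set O : Set E := O₂ ∩ g ⁻¹' O₁ with hOdef
      have O_open : IsOpen O := O₂_open.inter (O₁_open.preimage g_cont)
      have heO : e ∈ O := ⟨he, hhe⟩
      have hF_ne : Oᶜ ≠ univ := by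
        intro hc
        have : e ∈ Oᶜ := hc ▸ mem_univ e
        exact this heO
      have hF_closed : IsClosed (Oᶜ : Set E) := O_open.isClosed_compl
      apply E_min Oᶜ hF_ne hF_closed
      apply eq_univ_of_forall
      intro z
      rcases ρ_surj z with ⟨a, rfl⟩
      by_cases haO : a ∈ O
      · refine ⟨g a, ?_, g_comm a⟩
        intro hgaO
        exact absurd hgaO.1 (disjoint_left.mp hdisj haO.2)
      · exact ⟨a, haO, rfl⟩
    -- E is projective, hence extremally disconnected
    have E_proj : CompactT2.Projective E := by
      intro Y' Z' _ _ _ _ _ _ φ g' φ_cont g'_cont g'_surj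
      obtain ⟨ψ, ψ_cont, ψ_comm⟩ :=
        (StoneCech.projective (X := DiscCopy Z))
          (φ_cont.comp h_cont) g'_cont g'_surj
      refine ⟨fun x => ψ ↑x, ψ_cont.comp continuous_subtype_val, ?_⟩
      funext x
      have := congrFun ψ_comm (↑x : StoneCech (DiscCopy Z))
      simp only [comp_apply] at this ⊢
      rw [this, h_fix x]
    haveI : ExtremallyDisconnected E := CompactT2.Projective.extremallyDisconnected E_proj
    -- apply the hypothesis to E
    have hBP := H E (f ∘ ρ) (hf.comp ρ_cont)
    have hBP' : HasBaireProperty (ρ ⁻¹' (f ⁻¹' A)) := hBP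
    exact hasBaireProperty_of_preimage ρ_cont ρ_surj ρ_cont.isClosedMap E_min hBP'
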